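/- Let Φ be an N-function that is C² on (0,∞), satisfies the Δ₂-condition with constant D, and is uniformly convex with constants 0 < c ≤ C. Define Ψ : [0,∞) → [0,∞) by Ψ(0) = 0 and Ψ'(t) = √(t Φ'(t)). Then Ψ is an N-function satisfying the Δ₂-condition with a constant depending only on D, Ψ is C² on (0,∞), and there exist constants 0 < c' ≤ C', depending only on c and C, such that c' √(Φ''(t)) ≤ Ψ''(t) ≤ C' √(Φ''(t)) for all t > 0. -/

import Mathlib

open MeasureTheory

/-- An N-function `Φ` with derivative `Φ'`: differentiable on `[0,∞)` with
`Φ(0) = 0`, `Φ(t) = ∫₀ᵗ Φ'(s) ds`, `Φ'` nondecreasing, right-continuous,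
`Φ'(0) = 0` and `Φ'(t) > 0` for `t > 0`. -/
structure IsNFunction (Φ Φ' : ℝ → ℝ) : Prop where
  map_zero : Φ 0 = 0
  eq_integral : ∀ t : ℝ, 0 ≤ t → Φ t = ∫ s in (0:ℝ)..t, Φ' s
  deriv_zero : Φ' 0 = 0
  deriv_pos : ∀ t : ℝ, 0 < t → 0 < Φ' t
  deriv_mono : MonotoneOn Φ' (Set.Ici 0)
  deriv_rightCont : ∀ t : ℝ, 0 ≤ t → ContinuousWithinAt Φ' (Set.Ici t) t

/-- The Δ₂-condition with constant `D`. -/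
def Delta2 (Φ : ℝ → ℝ) (D : ℝ) : Prop := ∀ t : ℝ, 0 < t → Φ (2 * t) ≤ D * Φ t

/-- Uniform convexity with constants `c ≤ C`: `c Φ'(t) ≤ t Φ''(t) ≤ C Φ'(t)` for `t > 0`. -/
def UniformlyConvex (Φ' Φ'' : ℝ → ℝ) (c C : ℝ) : Prop :=
  ∀ t : ℝ, 0 < t → c * Φ' t ≤ t * Φ'' t ∧ t * Φ'' t ≤ C * Φ' t

/-- `ψ'(t) = √(t Φ'(t))`. -/
noncomputable def psiDeriv (Φ' : ℝ → ℝ) (t : ℝ) : ℝ := Real.sqrt (t * Φ' t)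

/-- `ψ(t) = ∫₀ᵗ √(s Φ'(s)) ds`. -/
noncomputable def psiOf (Φ' : ℝ → ℝ) (t : ℝ) : ℝ := ∫ s in (0:ℝ)..t, psiDeriv Φ' s

/-- `V(s) = ψ'(|s|) s/|s|` for `s ≠ 0`, `V(0) = 0`. -/
noncomputable def Vof (Φ' : ℝ → ℝ) (s : ℝ) : ℝ :=
  if s = 0 then 0 else psiDeriv Φ' |s| * s / |s|

/-- with `Ψ(0) = 0`, `Ψ'(t) = √(t Φ'(t))`, the function `Ψ` is an
N-function in `Δ₂` (constant depending only on `D`), is `C²` on `(0,∞)`, and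
`Ψ''(t) ≂ √(Φ''(t))` with constants depending only on `c, C`. -/
theorem statement5 :
    ∀ D : ℝ, 0 < D → ∃ D' : ℝ, 0 < D' ∧
    ∀ c C : ℝ, 0 < c → c ≤ C → ∃ c' C' : ℝ, 0 < c' ∧ c' ≤ C' ∧
      ∀ (Φ Φ' Φ'' : ℝ → ℝ),
        IsNFunction Φ Φ' →
        ContDiffOn ℝ 2 Φ (Set.Ioi 0) →
        (∀ t : ℝ, 0 < t → HasDerivAt Φ (Φ' t) t) →
        (∀ t : ℝ, 0 < t → HasDerivAt Φ' (Φ'' t) t) →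
        Delta2 Φ D →
        UniformlyConvex Φ' Φ'' c C →
        IsNFunction (psiOf Φ') (psiDeriv Φ') ∧
        Delta2 (psiOf Φ') D' ∧
        ContDiffOn ℝ 2 (psiOf Φ') (Set.Ioi 0) ∧
        ∃ Ψ'' : ℝ → ℝ,
          (∀ t : ℝ, 0 < t → HasDerivAt (psiDeriv Φ') (Ψ'' t) t) ∧
          ∀ t : ℝ, 0 < t →
            c' * Real.sqrt (Φ'' t) ≤ Ψ'' t ∧ Ψ'' t ≤ C' * Real.sqrt (Φ'' t) := by

  intro D hD
  refine ⟨2 * D, by positivity, ?_⟩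
  intro c C hc hcC
  have hC : 0 < C := lt_of_lt_of_le hc hcC
  have hsc : 0 < Real.sqrt c := Real.sqrt_pos.mpr hc
  have hsC : 0 < Real.sqrt C := Real.sqrt_pos.mpr hC
  refine ⟨(1 + c) / (2 * Real.sqrt C), (1 + C) / (2 * Real.sqrt c), by positivity, ?_, ?_⟩
  · refine div_le_div₀ (by positivity) (by linarith) (by positivity) ?_
    have := Real.sqrt_le_sqrt hcC
    linarith
  intro Φ Φ' Φ'' hN hΦC2 hΦd hΦ'd hD2 hUC
  have hnn : ∀ s : ℝ, 0 ≤ s → 0 ≤ Φ' s := fun s hs => by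
    simpa [hN.deriv_zero] using hN.deriv_mono Set.self_mem_Ici hs hs
  have hgmono : MonotoneOn (fun s => s * Φ' s) (Set.Ici 0) := fun x hx y hy hxy =>
    mul_le_mul hxy (hN.deriv_mono hx hy hxy) (hnn x hx) (le_trans hx hxy)
  have hpmono : MonotoneOn (psiDeriv Φ') (Set.Ici 0) := fun x hx y hy hxy =>
    Real.sqrt_le_sqrt (hgmono hx hy hxy)
  have hΦ'int : ∀ a b : ℝ, 0 ≤ a → a ≤ b → IntervalIntegrable Φ' volume a b := by
    intro a b ha hab
    refine MonotoneOn.intervalIntegrable (hN.deriv_mono.mono ?_)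
    rw [Set.uIcc_of_le hab]
    exact Set.Icc_subset_Ici_self.trans (Set.Ici_subset_Ici.mpr ha)
  have hpint : ∀ a b : ℝ, 0 ≤ a → a ≤ b → IntervalIntegrable (psiDeriv Φ') volume a b := by
    intro a b ha hab
    refine MonotoneOn.intervalIntegrable (hpmono.mono ?_)
    rw [Set.uIcc_of_le hab]
    exact Set.Icc_subset_Ici_self.trans (Set.Ici_subset_Ici.mpr ha)
  have hpcontAt : ∀ t : ℝ, 0 < t → ContinuousAt (psiDeriv Φ') t := fun t ht =>
    Real.continuous_sqrt.continuousAt.comp (continuousAt_id.mul (hΦ'd t ht).continuousAt)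
  have hpcontOn : ContinuousOn (psiDeriv Φ') (Set.Ioi 0) := fun t ht =>
    (hpcontAt t ht).continuousWithinAt
  have hpsiD : ∀ t : ℝ, 0 < t → HasDerivAt (psiOf Φ') (psiDeriv Φ' t) t := fun t ht =>
    intervalIntegral.integral_hasDerivAt_right (hpint 0 t le_rfl (le_of_lt ht))
      (hpcontOn.stronglyMeasurableAtFilter isOpen_Ioi t ht) (hpcontAt t ht)
  -- Ψ is an N-function
  have hNpsi : IsNFunction (psiOf Φ') (psiDeriv Φ') := by
    refine ⟨?_, fun t _ => rfl, ?_, ?_, hpmono, ?_⟩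
    · simp [psiOf]
    · simp [psiDeriv]
    · intro t ht
      exact Real.sqrt_pos.mpr (mul_pos ht (hN.deriv_pos t ht))
    · intro t ht
      exact Real.continuous_sqrt.continuousAt.comp_continuousWithinAt
        (continuousWithinAt_id.mul (hN.deriv_rightCont t ht))
  -- pointwise key inequality for Δ₂
  have hkey : ∀ u : ℝ, 0 ≤ u → psiDeriv Φ' (2 * u) ≤ D * psiDeriv Φ' u := by
    intro u hu
    rcases eq_or_lt_of_le hu with h | hu
    · simp [psiDeriv, ← h, hN.deriv_zero]
    · have h2u : (0:ℝ) < 2 * u := by linarith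
      have h4u : (0:ℝ) < 4 * u := by linarith
      have hsplit : Φ (4*u) = (∫ s in (0:ℝ)..(2*u), Φ' s) + ∫ s in (2*u)..(4*u), Φ' s := by
        rw [hN.eq_integral (4*u) h4u.le,
          ← intervalIntegral.integral_add_adjacent_intervals (hΦ'int 0 (2*u) le_rfl h2u.le)
            (hΦ'int (2*u) (4*u) h2u.le (by linarith))]
      have h1a : (0:ℝ) ≤ ∫ s in (0:ℝ)..(2*u), Φ' s :=
        intervalIntegral.integral_nonneg h2u.le (fun s hs => hnn s hs.1)
      have h1b : 2*u * Φ' (2*u) ≤ ∫ s in (2*u)..(4*u), Φ' s := by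
        have hmono' : ∀ s ∈ Set.Icc (2*u) (4*u), (fun _ : ℝ => Φ' (2*u)) s ≤ Φ' s := fun s hs =>
          hN.deriv_mono (Set.mem_Ici.mpr h2u.le) (Set.mem_Ici.mpr (h2u.le.trans hs.1)) hs.1
        have h := intervalIntegral.integral_mono_on (by linarith : 2*u ≤ 4*u)
          intervalIntegrable_const (hΦ'int (2*u) (4*u) h2u.le (by linarith)) hmono'
        rw [intervalIntegral.integral_const, smul_eq_mul] at h
        nlinarith [h]
      have hPhi_u : Φ u ≤ u * Φ' u := by
        have hmono' : ∀ s ∈ Set.Icc (0:ℝ) u, Φ' s ≤ (fun _ : ℝ => Φ' u) s := fun s hs =>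
          hN.deriv_mono (Set.mem_Ici.mpr hs.1) (Set.mem_Ici.mpr hu.le) hs.2
        have h := intervalIntegral.integral_mono_on hu.le (hΦ'int 0 u le_rfl hu.le)
          intervalIntegrable_const hmono'
        rw [intervalIntegral.integral_const, smul_eq_mul] at h
        rw [hN.eq_integral u hu.le]
        nlinarith [h]
      have hD4 : Φ (4*u) ≤ D * (D * Φ u) := by
        have ha1 := hD2 (2*u) h2u
        have ha2 := hD2 u hu
        rw [show (2:ℝ) * (2*u) = 4*u by ring] at ha1
        nlinarith [mul_le_mul_of_nonneg_left ha2 hD.le]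
      have hmain : 2*u * Φ' (2*u) ≤ D^2 * (u * Φ' u) := by
        nlinarith [mul_le_mul_of_nonneg_left hPhi_u (mul_nonneg hD.le hD.le)]
      calc psiDeriv Φ' (2*u) = Real.sqrt (2*u * Φ' (2*u)) := rfl
        _ ≤ Real.sqrt (D^2 * (u * Φ' u)) := Real.sqrt_le_sqrt hmain
        _ = D * psiDeriv Φ' u := by
            rw [Real.sqrt_mul (sq_nonneg D), Real.sqrt_sq hD.le]; rfl
  -- Δ₂ for Ψ
  have hD2psi : Delta2 (psiOf Φ') (2*D) := by
    intro t ht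
    have hsub : psiOf Φ' (2*t) = 2 * ∫ u in (0:ℝ)..t, psiDeriv Φ' (2*u) := by
      rw [show (∫ u in (0:ℝ)..t, psiDeriv Φ' (2*u))
            = (2:ℝ)⁻¹ • ∫ s in (2*(0:ℝ))..(2*t), psiDeriv Φ' s from
          intervalIntegral.integral_comp_mul_left _ two_ne_zero]
      simp [psiOf, smul_eq_mul]
    have hint1 : IntervalIntegrable (fun u => psiDeriv Φ' (2*u)) volume 0 t := by
      refine MonotoneOn.intervalIntegrable ?_
      rw [Set.uIcc_of_le ht.le]
      intro x hx y hy hxy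
      exact hpmono (Set.mem_Ici.mpr (by linarith [hx.1])) (Set.mem_Ici.mpr (by linarith [hy.1]))
        (by linarith)
    have hint2 : IntervalIntegrable (fun u => D * psiDeriv Φ' u) volume 0 t :=
      (hpint 0 t le_rfl ht.le).const_mul D
    have hle := intervalIntegral.integral_mono_on ht.le hint1 hint2 (fun u hu => hkey u hu.1)
    rw [intervalIntegral.integral_const_mul] at hle
    calc psiOf Φ' (2*t) = 2 * ∫ u in (0:ℝ)..t, psiDeriv Φ' (2*u) := hsub
      _ ≤ 2 * (D * ∫ u in (0:ℝ)..t, psiDeriv Φ' u) := by linarith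
      _ = 2*D * psiOf Φ' t := by rw [psiOf]; ring
  -- C² regularity
  have hΦ'C1 : ContDiffOn ℝ 1 Φ' (Set.Ioi 0) := by
    have h2 : ContDiffOn ℝ (1+1) Φ (Set.Ioi 0) := by
      convert hΦC2 using 2
      exact one_add_one_eq_two
    have := ((contDiffOn_succ_iff_deriv_of_isOpen isOpen_Ioi).mp h2).2.2
    exact this.congr (fun t ht => (hΦd t ht).deriv.symm)
  have hgC1 : ContDiffOn ℝ 1 (fun s : ℝ => s * Φ' s) (Set.Ioi 0) := contDiffOn_id.mul hΦ'C1
  have hpC1 : ContDiffOn ℝ 1 (psiDeriv Φ') (Set.Ioi 0) :=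
    hgC1.sqrt (fun t ht => (mul_pos ht (hN.deriv_pos t ht)).ne')
  have hpsiC2 : ContDiffOn ℝ 2 (psiOf Φ') (Set.Ioi 0) := by
    have : ContDiffOn ℝ (1+1) (psiOf Φ') (Set.Ioi 0) := by
      refine (contDiffOn_succ_iff_deriv_of_isOpen isOpen_Ioi).mpr ⟨?_, ?_, ?_⟩
      · exact fun t ht => ((hpsiD t ht).differentiableAt.differentiableWithinAt)
      · intro h; exact absurd h (by norm_num)
      · exact hpC1.congr (fun t ht => (hpsiD t ht).deriv)
    convert this using 2
    exact one_add_one_eq_two.symm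
  refine ⟨hNpsi, hD2psi, hpsiC2,
    fun t => (Φ' t + t * Φ'' t) / (2 * Real.sqrt (t * Φ' t)), ?_, ?_⟩
  · intro t ht
    have hgpos : 0 < t * Φ' t := mul_pos ht (hN.deriv_pos t ht)
    have hg : HasDerivAt (fun s => s * Φ' s) (1 * Φ' t + t * Φ'' t) t :=
      (hasDerivAt_id t).mul (hΦ'd t ht)
    have hs := (Real.hasDerivAt_sqrt hgpos.ne').comp t hg
    convert hs using 1
    have : Real.sqrt (t * Φ' t) ≠ 0 := (Real.sqrt_pos.mpr hgpos).ne'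
    · rfl
    · rfl
    · rfl
    · simp only [one_mul]
      ring
  · intro t ht
    obtain ⟨h1, h2⟩ := hUC t ht
    have ha : 0 < Φ' t := hN.deriv_pos t ht
    set a := Φ' t with ha'
    set b := Φ'' t with hb'
    have hb : 0 < b := by nlinarith
    have hta : 0 < t * a := mul_pos ht ha
    have hatb : 0 < a + t * b := by nlinarith
    have hΨeq : (a + t * b) / (2 * Real.sqrt (t * a))
        = Real.sqrt ((a + t*b)^2 / (4 * (t*a))) := by
      rw [Real.sqrt_div (sq_nonneg _), Real.sqrt_sq hatb.le,
        show (4:ℝ)*(t*a) = (2:ℝ)^2 * (t*a) by ring,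
        Real.sqrt_mul (by norm_num : (0:ℝ) ≤ (2:ℝ)^2),
        Real.sqrt_sq (by norm_num : (0:ℝ) ≤ (2:ℝ))]
    have hA : (1+c)*a ≤ a + t*b := by linarith
    have hB : a + t*b ≤ (1+C)*a := by linarith
    constructor
    · have key : ((1+c)/(2*Real.sqrt C))^2 * b ≤ (a + t*b)^2 / (4*(t*a)) := by
        rw [div_pow, div_mul_eq_mul_div, div_le_div_iff₀ (by positivity) (by positivity)]
        rw [mul_pow, Real.sq_sqrt hC.le]
        have h4 : ((1+c)*a)^2 ≤ (a+t*b)^2 := by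
          apply pow_le_pow_left₀ (by positivity) hA
        nlinarith [mul_le_mul_of_nonneg_left h4 hC.le,
          mul_le_mul_of_nonneg_left h2 (by positivity : (0:ℝ) ≤ (1+c)^2*a)]
      calc (1+c)/(2*Real.sqrt C) * Real.sqrt b
          = Real.sqrt (((1+c)/(2*Real.sqrt C))^2 * b) := by
            rw [Real.sqrt_mul (sq_nonneg _), Real.sqrt_sq (by positivity)]
        _ ≤ Real.sqrt ((a+t*b)^2/(4*(t*a))) := Real.sqrt_le_sqrt key
        _ = (a + t*b) / (2*Real.sqrt (t*a)) := hΨeq.symm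
    · have key : (a + t*b)^2 / (4*(t*a)) ≤ ((1+C)/(2*Real.sqrt c))^2 * b := by
        rw [div_pow, div_mul_eq_mul_div, div_le_div_iff₀ (by positivity) (by positivity)]
        rw [mul_pow, Real.sq_sqrt hc.le]
        have h4 : (a+t*b)^2 ≤ ((1+C)*a)^2 := by
          apply pow_le_pow_left₀ (by positivity) hB
        nlinarith [mul_le_mul_of_nonneg_left h4 hc.le,
          mul_le_mul_of_nonneg_left h1 (by positivity : (0:ℝ) ≤ (1+C)^2*a)]
      calc (a + t*b) / (2*Real.sqrt (t*a)) = Real.sqrt ((a+t*b)^2/(4*(t*a))) := hΨeq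
        _ ≤ Real.sqrt (((1+C)/(2*Real.sqrt c))^2 * b) := Real.sqrt_le_sqrt key
        _ = (1+C)/(2*Real.sqrt c) * Real.sqrt b := by
            rw [Real.sqrt_mul (sq_nonneg _), Real.sqrt_sq (by positivity)]
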